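/- With R(τ) = (1/(4·√(2π)))·e^{−τ/4}·(1 − e^{−τ/2})^{-3/2} for τ > 0, one has ∫_0^∞ τ·R(τ) dτ = √(2π). -/

import Mathlib

open Real MeasureTheory

/-- The Lévy jump rate density of the inverse local time at zero of the
Ornstein–Uhlenbeck process. -/
noncomputable def Rrate (τ : ℝ) : ℝ :=
  (1 / (4 * Real.sqrt (2 * Real.pi))) * Real.exp (-τ/4) * (1 - Real.exp (-τ/2)) ^ (-(3:ℝ)/2)

noncomputable def Fanti (τ : ℝ) : ℝ :=
  (1 / Real.sqrt (2 * Real.pi)) *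
    (-(τ * Real.exp (-τ/4) * (1 - Real.exp (-τ/2)) ^ (-(1:ℝ)/2))
      - 4 * Real.arcsin (Real.exp (-τ/4)))

lemma u_pos {τ : ℝ} (hτ : 0 < τ) : 0 < 1 - Real.exp (-τ/2) := by
  have : Real.exp (-τ/2) < 1 := by
    rw [Real.exp_lt_one_iff]; linarith
  linarith

lemma exp_sq (τ : ℝ) : Real.exp (-τ/4) ^ 2 = Real.exp (-τ/2) := by
  rw [sq, ← Real.exp_add]; ring_nf

lemma Fanti_hasDerivAt {τ : ℝ} (hτ : 0 < τ) : HasDerivAt Fanti (τ * Rrate τ) τ := by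
  have hu := u_pos hτ
  set s := Real.exp (-τ/2) with hs
  set e := Real.exp (-τ/4) with he
  -- derivative of inner exp maps
  have h1 : HasDerivAt (fun x : ℝ => 1 - Real.exp (-x/2)) (s/2) τ := by
    have : HasDerivAt (fun x : ℝ => -x/2) (-(1:ℝ)/2) τ := by
      simpa using ((hasDerivAt_id τ).neg.div_const 2)
    have h := this.exp
    have h2 := (hasDerivAt_const τ (1:ℝ)).sub h
    refine h2.congr_deriv ?_
    rw [hs]; ring
  have h3 : HasDerivAt (fun x : ℝ => Real.exp (-x/4)) (-e/4) τ := by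
    have : HasDerivAt (fun x : ℝ => -x/4) (-(1:ℝ)/4) τ := by
      simpa using ((hasDerivAt_id τ).neg.div_const 4)
    have h := this.exp
    convert h using 1
    ring
  -- rpow part
  have h2 : HasDerivAt (fun x : ℝ => (1 - Real.exp (-x/2)) ^ (-(1:ℝ)/2))
      ((-(1:ℝ)/2) * (1 - s) ^ (-(1:ℝ)/2 - 1) * (s/2)) τ := by
    have hr := (Real.hasDerivAt_rpow_const (x := 1 - s) (p := -(1:ℝ)/2) (Or.inl hu.ne'))
    exact hr.comp τ h1
  -- product τ * e * u^{-1/2}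
  have hprod : HasDerivAt (fun x : ℝ => x * Real.exp (-x/4) * (1 - Real.exp (-x/2)) ^ (-(1:ℝ)/2))
      ((1 * e + τ * (-e/4)) * (1 - s) ^ (-(1:ℝ)/2)
        + (τ * e) * ((-(1:ℝ)/2) * (1 - s) ^ (-(1:ℝ)/2 - 1) * (s/2))) τ := by
    exact ((hasDerivAt_id τ).mul h3).mul h2
  -- arcsin part
  have he1 : e < 1 := by rw [he, Real.exp_lt_one_iff]; linarith
  have he0 : 0 < e := Real.exp_pos _
  have harc : HasDerivAt (fun x : ℝ => Real.arcsin (Real.exp (-x/4)))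
      ((1 / Real.sqrt (1 - s)) * (-e/4)) τ := by
    have h := (Real.hasDerivAt_arcsin (by linarith) (ne_of_lt he1)).comp τ h3
    rw [show s = e ^ 2 from (exp_sq τ).symm]
    exact h
  -- assemble
  have hF : HasDerivAt Fanti
      ((1 / Real.sqrt (2 * Real.pi)) *
        (-((1 * e + τ * (-e/4)) * (1 - s) ^ (-(1:ℝ)/2)
            + (τ * e) * ((-(1:ℝ)/2) * (1 - s) ^ (-(1:ℝ)/2 - 1) * (s/2)))
          - 4 * ((1 / Real.sqrt (1 - s)) * (-e/4)))) τ := by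
    exact ((hprod.neg.sub (harc.const_mul 4)).const_mul _)
  convert hF using 1
  -- algebra
  have hinv : (1 / Real.sqrt (1 - s)) = (1 - s) ^ (-(1:ℝ)/2) := by
    rw [Real.sqrt_eq_rpow, one_div, ← Real.rpow_neg hu.le]
    norm_num
  have hexp32 : (-(1:ℝ)/2 - 1) = (-(3:ℝ)/2) := by norm_num
  have hkey : (1 - s) ^ (-(1:ℝ)/2) = (1 - s) * (1 - s) ^ (-(3:ℝ)/2) := by
    rw [show (-(1:ℝ)/2) = 1 + (-(3:ℝ)/2) by norm_num, Real.rpow_add hu, Real.rpow_one]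
  rw [hinv, hexp32, hkey, Rrate]
  rw [← hs, ← he]
  ring

lemma Fanti_tendsto_atTop : Filter.Tendsto Fanti Filter.atTop (nhds 0) := by
  have hA : Filter.Tendsto (fun τ : ℝ => τ * Real.exp (-τ/4)) Filter.atTop (nhds 0) := by
    have h := tendsto_rpow_mul_exp_neg_mul_atTop_nhds_zero 1 (1/4) (by norm_num)
    refine h.congr fun x => ?_
    rw [Real.rpow_one, show -(1/4:ℝ)*x = -x/4 by ring]
  have hexp : Filter.Tendsto (fun τ : ℝ => Real.exp (-τ/4)) Filter.atTop (nhds 0) := by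
    apply Real.tendsto_exp_atBot.comp
    have : Filter.Tendsto (fun τ : ℝ => -(τ/4)) Filter.atTop Filter.atBot :=
      Filter.tendsto_neg_atTop_atBot.comp (Filter.tendsto_id.atTop_div_const (by norm_num))
    exact this.congr fun x => by ring
  have hu : Filter.Tendsto (fun τ : ℝ => 1 - Real.exp (-τ/2)) Filter.atTop (nhds 1) := by
    have hexp2 : Filter.Tendsto (fun τ : ℝ => Real.exp (-τ/2)) Filter.atTop (nhds 0) := by
      apply Real.tendsto_exp_atBot.comp
      have : Filter.Tendsto (fun τ : ℝ => -(τ/2)) Filter.atTop Filter.atBot :=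
        Filter.tendsto_neg_atTop_atBot.comp (Filter.tendsto_id.atTop_div_const (by norm_num))
      exact this.congr fun x => by ring
    simpa using tendsto_const_nhds.sub hexp2
  have hB : Filter.Tendsto (fun τ : ℝ => (1 - Real.exp (-τ/2)) ^ (-(1:ℝ)/2))
      Filter.atTop (nhds 1) := by
    have hc : ContinuousAt (fun y : ℝ => y ^ (-(1:ℝ)/2)) 1 :=
      Real.continuousAt_rpow_const 1 _ (Or.inl one_ne_zero)
    have := hc.tendsto.comp hu
    simpa [Real.one_rpow, Function.comp_def] using this
  have harc : Filter.Tendsto (fun τ : ℝ => Real.arcsin (Real.exp (-τ/4)))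
      Filter.atTop (nhds 0) := by
    have := (Real.continuous_arcsin.tendsto 0).comp hexp
    simpa [Real.arcsin_zero, Function.comp_def] using this
  have : Filter.Tendsto Fanti Filter.atTop
      (nhds ((1 / Real.sqrt (2 * Real.pi)) * (-(0 * 1) - 4 * 0))) := by
    exact (((hA.mul hB).neg.sub (harc.const_mul 4)).const_mul _)
  simpa using this

lemma g_le {x : ℝ} (hx : 0 < x) :
    x * Real.exp (-x/4) * (1 - Real.exp (-x/2)) ^ (-(1:ℝ)/2) ≤ Real.sqrt (2*x) := by
  have hu := u_pos hx
  set s := Real.exp (-x/2) with hs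
  set e := Real.exp (-x/4) with he
  have hinv : ((1 - s) : ℝ) ^ (-(1:ℝ)/2) = 1 / Real.sqrt (1 - s) := by
    rw [Real.sqrt_eq_rpow, one_div, ← Real.rpow_neg hu.le]
    norm_num
  have hub : (x/2) * s ≤ 1 - s := by
    have h1 := Real.add_one_le_exp (x/2)
    have hm : Real.exp (x/2) * s = 1 := by
      rw [hs, ← Real.exp_add, show x/2 + -x/2 = 0 by ring, Real.exp_zero]
    nlinarith [Real.exp_pos (-x/2)]
  have hse : Real.sqrt s = e := by
    rw [show s = e ^ 2 from (exp_sq x).symm, Real.sqrt_sq (Real.exp_nonneg _)]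
  have h2 : Real.sqrt (x/2) * e ≤ Real.sqrt (1 - s) := by
    rw [← hse, ← Real.sqrt_mul (by linarith)]
    exact Real.sqrt_le_sqrt hub
  have h1 : Real.sqrt (2*x) * Real.sqrt (x/2) = x := by
    rw [← Real.sqrt_mul (by linarith), show 2*x*(x/2) = x^2 by ring, Real.sqrt_sq hx.le]
  rw [hinv, mul_one_div, div_le_iff₀ (Real.sqrt_pos.mpr hu)]
  calc x * e = Real.sqrt (2*x) * (Real.sqrt (x/2) * e) := by rw [← mul_assoc, h1]
    _ ≤ Real.sqrt (2*x) * Real.sqrt (1 - s) :=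
        mul_le_mul_of_nonneg_left h2 (Real.sqrt_nonneg _)

lemma Fanti_contWithinAt : ContinuousWithinAt Fanti (Set.Ici 0) 0 := by
  have hg : Filter.Tendsto (fun x : ℝ => x * Real.exp (-x/4) * (1 - Real.exp (-x/2)) ^ (-(1:ℝ)/2))
      (nhdsWithin 0 (Set.Ici 0)) (nhds 0) := by
    apply tendsto_of_tendsto_of_tendsto_of_le_of_le' (g := fun _ : ℝ => (0:ℝ))
      (h := fun x : ℝ => Real.sqrt (2*x)) tendsto_const_nhds
    · have hcont : Continuous (fun x : ℝ => Real.sqrt (2*x)) := by fun_prop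
      have h0 : Filter.Tendsto (fun x : ℝ => Real.sqrt (2*x)) (nhds 0) (nhds 0) := by
        simpa using hcont.tendsto 0
      exact h0.mono_left nhdsWithin_le_nhds
    · filter_upwards [self_mem_nhdsWithin] with x (hx : (0:ℝ) ≤ x)
      have h0 : (0:ℝ) ≤ 1 - Real.exp (-x/2) := by
        have : Real.exp (-x/2) ≤ 1 := Real.exp_le_one_iff.mpr (by linarith)
        linarith
      positivity
    · filter_upwards [self_mem_nhdsWithin] with x (hx : (0:ℝ) ≤ x)
      rcases hx.eq_or_lt with h | h
      · subst h; simp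
      · exact g_le h
  have harc : Filter.Tendsto (fun x : ℝ => Real.arcsin (Real.exp (-x/4)))
      (nhdsWithin 0 (Set.Ici 0)) (nhds (Real.arcsin (Real.exp (-(0:ℝ)/4)))) := by
    exact ((Real.continuous_arcsin.comp (by fun_prop : Continuous fun x : ℝ => Real.exp (-x/4))).tendsto 0).mono_left
      nhdsWithin_le_nhds
  have : Filter.Tendsto Fanti (nhdsWithin 0 (Set.Ici 0))
      (nhds ((1 / Real.sqrt (2 * Real.pi)) *
        (-(0:ℝ) - 4 * Real.arcsin (Real.exp (-(0:ℝ)/4))))) :=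
    ((hg.neg.sub (harc.const_mul 4)).const_mul _)
  unfold ContinuousWithinAt
  convert this using 2
  unfold Fanti
  norm_num

lemma Fanti_zero : Fanti 0 = - Real.sqrt (2 * Real.pi) := by
  have hπ : (0:ℝ) < 2 * Real.pi := by positivity
  have hsq : Real.sqrt (2 * Real.pi) * Real.sqrt (2 * Real.pi) = 2 * Real.pi :=
    Real.mul_self_sqrt hπ.le
  have hne : Real.sqrt (2 * Real.pi) ≠ 0 := by positivity
  unfold Fanti
  rw [show ((-0:ℝ)/4) = 0 by norm_num, show ((-0:ℝ)/2) = 0 by norm_num,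
    Real.exp_zero, Real.arcsin_one]
  rw [show -(0 * 1 * ((1 - 1:ℝ) ^ (-(1:ℝ)/2))) - 4 * (Real.pi/2) = -(2*Real.pi) by ring]
  rw [one_div, inv_mul_eq_div, div_eq_iff hne]
  linarith [hsq]

theorem stmt18 :
    (∫ τ in Set.Ioi (0:ℝ), τ * Rrate τ) = Real.sqrt (2 * Real.pi) := by
  have hpos : ∀ x ∈ Set.Ioi (0:ℝ), 0 ≤ x * Rrate x := by
    intro x hx
    have hu := u_pos hx
    unfold Rrate
    have : (0:ℝ) ≤ (1 - Real.exp (-x/2)) ^ (-(3:ℝ)/2) := Real.rpow_nonneg hu.le _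
    have hx0 : (0:ℝ) ≤ x := (le_of_lt hx)
    positivity
  have h := integral_Ioi_of_hasDerivAt_of_nonneg Fanti_contWithinAt
    (fun x hx => Fanti_hasDerivAt hx) hpos Fanti_tendsto_atTop
  rw [h, Fanti_zero]
  ring
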